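/- arXiv:math/0309445 — 2 statements merged into one kernel-verified Lean document; each statement's English description precedes it below -/
import Mathlib

section
/- Let σ, τ ∈ ℂ with Re(σ+τ) > 1. Then ∫_{−∞}^{∞} (1/2+ix)^{−σ} (1/2−ix)^{−τ} dx = 2π·Γ(σ+τ−1)/(Γ(σ)Γ(τ)) (the Cauchy beta integral), where Γ is the complex Gamma function. -/
open MeasureTheory Complex Set Filter
open scoped Real Topology FourierTransform

/-- `(1/2 + i x) ^ λ := exp (λ · Log (1/2 + i x))`, principal branch. -/
noncomputable def zp (x : ℝ) (lam : ℂ) : ℂ :=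
  Complex.exp (lam * Complex.log (1/2 + Complex.I * x))

/-- `(1/2 - i x) ^ λ := exp (λ · Log (1/2 - i x))`, principal branch. -/
noncomputable def zm (x : ℝ) (lam : ℂ) : ℂ :=
  Complex.exp (lam * Complex.log (1/2 - Complex.I * x))

-- basic bound lemma
lemma line_abs_lower {z : ℂ} (hz : z.re = 1/2) : (1 + |z.im|) / 4 ≤ ‖z‖ := by
  have h1 := Complex.abs_re_le_norm z
  have h2 := Complex.abs_im_le_norm z
  rw [hz] at h1
  rw [abs_of_pos (by norm_num : (0:ℝ) < 1/2)] at h1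
  nlinarith [norm_nonneg z]

lemma norm_cpow_line_le {z : ℂ} (hz : z.re = 1/2) {lam : ℂ} (hlam : 0 ≤ lam.re) :
    ‖z ^ (-lam)‖ ≤ Real.exp (π / 2 * |lam.im|) * ((1 + |z.im|) / 4) ^ (-lam.re) := by
  have hz0 : z ≠ 0 := fun h => by simp [h] at hz
  have habs : ‖z ^ (-lam)‖ =
      ‖z‖ ^ (-lam).re / Real.exp (Complex.arg z * (-lam).im) :=
    Complex.norm_cpow_of_ne_zero hz0 _
  rw [habs]
  have harg : |Complex.arg z| ≤ π / 2 := by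
    rw [Complex.abs_arg_le_pi_div_two_iff]; rw [hz]; norm_num
  have h1 : ‖z‖ ^ (-lam).re ≤ ((1 + |z.im|) / 4) ^ (-lam.re) := by
    apply Real.rpow_le_rpow_of_nonpos (by positivity) (line_abs_lower hz)
    simpa using neg_nonpos.mpr hlam
  have h2 : Real.exp (-(π / 2 * |lam.im|)) ≤ Real.exp (Complex.arg z * (-lam).im) := by
    apply Real.exp_le_exp.2
    simp only [Complex.neg_im]
    have : |Complex.arg z * -lam.im| ≤ π / 2 * |lam.im| := by
      rw [abs_mul, abs_neg]
      exact mul_le_mul_of_nonneg_right harg (abs_nonneg _)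
    linarith [neg_abs_le (Complex.arg z * -lam.im)]
  calc ‖z‖ ^ (-lam).re / Real.exp (Complex.arg z * (-lam).im)
      ≤ ((1 + |z.im|) / 4) ^ (-lam.re) / Real.exp (-(π / 2 * |lam.im|)) := by
        apply div_le_div₀ (by positivity) h1 (Real.exp_pos _) h2
    _ = Real.exp (π / 2 * |lam.im|) * ((1 + |z.im|) / 4) ^ (-lam.re) := by
        rw [Real.exp_neg, div_inv_eq_mul, mul_comm]

lemma integrable_bound {c : ℝ} (hc : 1 < c) :
    Integrable (fun x : ℝ => ((1 + |x|) / 4) ^ (-c)) := by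
  have h : Integrable (fun x : ℝ => (1 + ‖x‖) ^ (-c)) :=
    integrable_one_add_norm (by simpa using hc)
  have := (h.const_mul ((4:ℝ) ^ c))
  refine this.congr ?_
  filter_upwards with x
  rw [Real.norm_eq_abs, Real.div_rpow (by positivity) (by norm_num : (0:ℝ) ≤ 4)]
  rw [Real.rpow_neg (by norm_num : (0:ℝ) ≤ 4)]
  field_simp

lemma contOn_laplace (a w : ℂ) :
    ContinuousOn (fun t : ℝ => (t : ℂ) ^ (a - 1) * Complex.exp (-(w * t))) (Ioi 0) := by
  apply ContinuousOn.mul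
  · intro t ht
    have : ContinuousAt (fun z : ℂ => z ^ (a - 1)) (t : ℂ) :=
      continuousAt_cpow_const (Or.inl (by simpa using ht))
    exact (this.comp Complex.continuous_ofReal.continuousAt).continuousWithinAt
  · exact (Complex.continuous_exp.comp (by continuity)).continuousOn

lemma norm_laplace {t : ℝ} (ht : 0 < t) (a w : ℂ) :
    ‖(t : ℂ) ^ (a - 1) * Complex.exp (-(w * t))‖ = t ^ (a.re - 1) * Real.exp (-(w.re * t)) := by
  rw [norm_mul, Complex.norm_exp,
    Complex.norm_cpow_eq_rpow_re_of_pos ht]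
  norm_num

lemma integrableOn_laplace {a w : ℂ} (ha : 0 < a.re) (hw : 0 < w.re) :
    IntegrableOn (fun t : ℝ => (t : ℂ) ^ (a - 1) * Complex.exp (-(w * t))) (Ioi 0) := by
  have hb : IntegrableOn (fun t : ℝ => t ^ (a.re - 1) * Real.exp (-w.re * t)) (Ioi 0) := by
    have := integrableOn_rpow_mul_exp_neg_mul_rpow (by linarith : (-1:ℝ) < a.re - 1)
      zero_lt_one hw
    simpa [Real.rpow_one] using this
  refine Integrable.mono' hb ((contOn_laplace a w).aestronglyMeasurable measurableSet_Ioi) ?_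
  filter_upwards [ae_restrict_mem measurableSet_Ioi] with t ht
  rw [norm_laplace ht]
  simp [neg_mul]

-- differentiability of the Laplace integral in w
lemma laplace_diff {a : ℂ} (ha : 0 < a.re) {w₀ : ℂ} (hw₀ : 0 < w₀.re) :
    DifferentiableAt ℂ
      (fun w : ℂ => ∫ t in Ioi (0:ℝ), (t : ℂ) ^ (a - 1) * Complex.exp (-(w * t))) w₀ := by
  set ε : ℝ := w₀.re / 2 with hε
  have hεpos : 0 < ε := by positivity
  have key := hasDerivAt_integral_of_dominated_loc_of_deriv_le (μ := volume.restrict (Ioi 0))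
    (F := fun (w : ℂ) (t : ℝ) => (t : ℂ) ^ (a - 1) * Complex.exp (-(w * t)))
    (F' := fun (w : ℂ) (t : ℝ) => (t : ℂ) ^ (a - 1) * (Complex.exp (-(w * t)) * (-(t:ℂ))))
    (x₀ := w₀)
    (bound := fun t : ℝ => t ^ a.re * Real.exp (-ε * t))
    (Metric.ball_mem_nhds w₀ hεpos) ?_ ?_ ?_ ?_ ?_ ?_
  · exact key.2.differentiableAt
  · filter_upwards with w
    exact (contOn_laplace a w).aestronglyMeasurable measurableSet_Ioi
  · exact integrableOn_laplace ha hw₀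
  · apply ContinuousOn.aestronglyMeasurable ?_ measurableSet_Ioi
    have := (contOn_laplace a w₀).mul (Complex.continuous_ofReal.continuousOn.neg)
    exact this.congr fun t _ => by simp only [Pi.mul_apply, Pi.neg_apply]; ring
  · filter_upwards [ae_restrict_mem measurableSet_Ioi] with t ht w hw
    have h1 : ‖(t : ℂ) ^ (a - 1) * (Complex.exp (-(w * t)) * (-(t:ℂ)))‖
        = t ^ (a.re - 1) * Real.exp (-(w.re * t)) * t := by
      rw [show (t : ℂ) ^ (a - 1) * (Complex.exp (-(w * t)) * (-(t:ℂ)))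
          = ((t : ℂ) ^ (a - 1) * Complex.exp (-(w * t))) * (-(t:ℂ)) by ring]
      rw [norm_mul, norm_laplace ht, norm_neg, Complex.norm_real, Real.norm_eq_abs,
        abs_of_pos ht]
    rw [h1]
    have hre : ε ≤ w.re := by
      have := Complex.abs_re_le_norm (w - w₀)
      simp only [Complex.sub_re] at this
      have hlt : ‖w - w₀‖ < ε := by simpa [Metric.mem_ball, dist_eq_norm] using hw
      have : |w.re - w₀.re| < ε := lt_of_le_of_lt this hlt
      rw [abs_lt] at this
      simp only [hε] at *
      linarith
    have : Real.exp (-(w.re * t)) ≤ Real.exp (-ε * t) := by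
      apply Real.exp_le_exp.2
      have ht' : 0 < t := ht
      nlinarith
    have hpow : t ^ (a.re - 1) * t = t ^ a.re := by
      rw [← Real.rpow_add_one (ne_of_gt (show (0:ℝ) < t from ht)) (a.re - 1)]
      norm_num
    calc t ^ (a.re - 1) * Real.exp (-(w.re * t)) * t
        = t ^ a.re * Real.exp (-(w.re * t)) := by rw [← hpow]; ring
      _ ≤ t ^ a.re * Real.exp (-ε * t) := by
          exact mul_le_mul_of_nonneg_left this (Real.rpow_nonneg ht.le _)
  · have := integrableOn_rpow_mul_exp_neg_mul_rpow (by linarith : (-1:ℝ) < a.re) zero_lt_one hεpos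
    have h' : IntegrableOn (fun t : ℝ => t ^ a.re * Real.exp (-ε * t)) (Ioi 0) := by
      simpa [Real.rpow_one] using this
    exact h'
  · filter_upwards [ae_restrict_mem measurableSet_Ioi] with t _ w _
    have hd : HasDerivAt (fun w : ℂ => Complex.exp (-(w * t)))
        (Complex.exp (-(w * t)) * (-(t:ℂ))) w := by
      have h0 : HasDerivAt (fun w : ℂ => -(w * (t:ℂ))) (-(t:ℂ)) w := by
        have := ((hasDerivAt_id' w).mul_const (t:ℂ)).neg; rwa [one_mul] at this
      simpa using h0.cexp
    simpa using hd.const_mul ((t : ℂ) ^ (a - 1))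

lemma laplace {a : ℂ} (ha : 0 < a.re) {w : ℂ} (hw : 0 < w.re) :
    ∫ t in Ioi (0:ℝ), (t : ℂ) ^ (a - 1) * Complex.exp (-(w * t))
      = Complex.Gamma a * w ^ (-a) := by
  set U : Set ℂ := {z : ℂ | 0 < z.re} with hU
  have hUo : IsOpen U := isOpen_lt continuous_const Complex.continuous_re
  have hUc : IsPreconnected U := (convex_halfSpace_re_gt 0).isPreconnected
  set F : ℂ → ℂ := fun z => ∫ t in Ioi (0:ℝ), (t : ℂ) ^ (a - 1) * Complex.exp (-(z * t))
  set G : ℂ → ℂ := fun z => Complex.Gamma a * z ^ (-a)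
  have hFd : DifferentiableOn ℂ F U := fun z hz => (laplace_diff ha hz).differentiableWithinAt
  have hFa : AnalyticOnNhd ℂ F U := hFd.analyticOnNhd hUo
  have hGa : AnalyticOnNhd ℂ G U := by
    apply DifferentiableOn.analyticOnNhd ?_ hUo
    intro z hz
    have : HasDerivAt (fun z : ℂ => z ^ (-a)) (-a * z ^ (-a - 1) * 1) z :=
      (hasDerivAt_id z).cpow_const (Or.inl hz)
    exact (this.differentiableAt.const_mul _).differentiableWithinAt
  have hreal : ∀ r : ℝ, 0 < r → F r = G r := by
    intro r hr
    have := Complex.integral_cpow_mul_exp_neg_mul_Ioi ha hr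
    have h2 : F (r:ℂ) = (1 / (r:ℂ)) ^ a * Complex.Gamma a := this
    rw [h2]
    have h3 : (1 / (r:ℂ)) ^ a = (r:ℂ) ^ (-a) := by
      rw [one_div, Complex.inv_cpow _ _ ?h, Complex.cpow_neg]
      case h =>
        rw [Complex.arg_ofReal_of_nonneg hr.le]
        exact (Real.pi_ne_zero).symm
    rw [h3, mul_comm]
  have hfreq : ∃ᶠ z in 𝓝[≠] (1:ℂ), F z = G z := by
    have htend : Tendsto (fun n : ℕ => ((1 + (n+1:ℝ)⁻¹ : ℝ) : ℂ)) atTop (𝓝[≠] (1:ℂ)) := by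
      apply tendsto_nhdsWithin_of_tendsto_nhds_of_eventually_within
      · have h1 : Tendsto (fun n : ℕ => (1 + (n+1:ℝ)⁻¹ : ℝ)) atTop (𝓝 (1 + 0)) := by
          apply Tendsto.const_add
          exact tendsto_inv_atTop_zero.comp (tendsto_atTop_add_const_right atTop 1
            tendsto_natCast_atTop_atTop)
        rw [add_zero] at h1
        have := (Complex.continuous_ofReal.tendsto (1:ℝ)).comp h1
        simpa [Function.comp_def] using this
      · filter_upwards with n
        have hpos : (0:ℝ) < ((n:ℝ)+1)⁻¹ := by positivity
        simp only [mem_compl_iff, mem_singleton_iff]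
        intro hcon
        have h2 : (1 + ((n:ℝ)+1)⁻¹ : ℝ) = 1 := by exact_mod_cast hcon
        linarith
    refine htend.frequently ((Filter.Eventually.of_forall ?_).frequently)
    intro n
    exact hreal _ (by positivity)
  have heq := hFa.eqOn_of_preconnected_of_frequently_eq hGa hUc
    (show (1:ℂ) ∈ U by simp [hU]) hfreq
  exact heq hw

-- basics
lemma rep (x : ℝ) : (1/2 + Complex.I * x : ℂ).re = 1/2 := by simp
lemma imp (x : ℝ) : (1/2 + Complex.I * x : ℂ).im = x := by simp
lemma nep (x : ℝ) : (1/2 + Complex.I * x : ℂ) ≠ 0 := by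
  intro h; have := rep x; rw [h] at this; norm_num at this
lemma rem (x : ℝ) : (1/2 - Complex.I * x : ℂ).re = 1/2 := by simp
lemma imm (x : ℝ) : (1/2 - Complex.I * x : ℂ).im = -x := by simp
lemma nem (x : ℝ) : (1/2 - Complex.I * x : ℂ) ≠ 0 := by
  intro h; have := rem x; rw [h] at this; norm_num at this

lemma zp_eq (x : ℝ) (l : ℂ) : zp x l = (1/2 + Complex.I * x : ℂ) ^ l := by
  rw [zp, Complex.cpow_def_of_ne_zero (nep x), mul_comm]
lemma zm_eq (x : ℝ) (l : ℂ) : zm x l = (1/2 - Complex.I * x : ℂ) ^ l := by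
  rw [zm, Complex.cpow_def_of_ne_zero (nem x), mul_comm]

lemma norm_zm_le (x : ℝ) {s : ℂ} (hs : 0 ≤ s.re) :
    ‖zm x (-s)‖ ≤ Real.exp (π / 2 * |s.im|) * ((1 + |x|) / 4) ^ (-s.re) := by
  rw [zm_eq]
  have := norm_cpow_line_le (rem x) hs
  rwa [imm, abs_neg] at this

lemma continuous_zm (l : ℂ) : Continuous (fun x : ℝ => zm x l) := by
  have : ∀ x : ℝ, ContinuousAt (fun x : ℝ => (1/2 - Complex.I * x : ℂ) ^ l) x := by
    intro x
    have h2 : ContinuousAt (fun x : ℝ => (1/2 - Complex.I * x : ℂ)) x := by fun_prop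
    exact ContinuousAt.cpow h2 continuousAt_const (Or.inl (by rw [rem]; norm_num))
  have hc : Continuous fun x : ℝ => (1/2 - Complex.I * x : ℂ) ^ l :=
    continuous_iff_continuousAt.2 this
  exact hc.congr (fun x => (zm_eq x l).symm)

lemma integrable_zm {s : ℂ} (hs : 1 < s.re) : Integrable (fun x : ℝ => zm x (-s)) := by
  refine Integrable.mono' (((integrable_bound hs).const_mul
    (Real.exp (π / 2 * |s.im|)))) (continuous_zm (-s)).aestronglyMeasurable ?_
  filter_upwards with x
  exact norm_zm_le x (by linarith)

-- the one-sided kernel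
noncomputable def kerG (τ : ℂ) : ℝ → ℂ :=
  indicator (Ioi 0) (fun s : ℝ => (s:ℂ) ^ (τ - 1) * Complex.exp (-((1/2 : ℂ) * s)))

lemma integrable_kerG {τ : ℂ} (hτ : 0 < τ.re) : Integrable (kerG τ) := by
  rw [kerG, integrable_indicator_iff measurableSet_Ioi]
  exact integrableOn_laplace hτ (by norm_num)

lemma fourier_kerG {τ : ℂ} (hτ : 0 < τ.re) (u : ℝ) :
    𝓕 (kerG τ) u = Complex.Gamma τ * (1/2 + Complex.I * ((2*π*u : ℝ) : ℂ)) ^ (-τ) := by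
  rw [Real.fourier_real_eq_integral_exp_smul]
  have h1 : (fun v : ℝ => Complex.exp (↑(-2 * π * v * u) * Complex.I) • kerG τ v)
      = indicator (Ioi 0) (fun v : ℝ => (v:ℂ) ^ (τ - 1)
          * Complex.exp (-((1/2 + Complex.I * ((2*π*u : ℝ) : ℂ)) * v))) := by
    ext v
    by_cases h : v ∈ Ioi 0
    · simp only [kerG, indicator_of_mem h, smul_eq_mul]
      rw [show (-((1/2 + Complex.I * ((2*π*u : ℝ) : ℂ)) * v))
          = (↑(-2 * π * v * u) * Complex.I) + (-((1/2 : ℂ) * v)) by push_cast; ring,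
        Complex.exp_add]
      ring
    · simp [kerG, indicator_of_notMem h]
  rw [h1, integral_indicator measurableSet_Ioi]
  exact laplace hτ (by rw [rep]; norm_num)

lemma integrable_fourier_kerG {τ : ℂ} (hτ : 1 < τ.re) : Integrable (𝓕 (kerG τ)) := by
  have hτ0 : 0 < τ.re := by linarith
  have hexp : (fun u : ℝ => Complex.Gamma τ * (1/2 + Complex.I * ((2*π*u : ℝ):ℂ)) ^ (-τ))
      = 𝓕 (kerG τ) := by
    ext u; rw [fourier_kerG hτ0]
  rw [← hexp]
  have hcont : Continuous (fun u : ℝ => Complex.Gamma τ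
      * (1/2 + Complex.I * ((2*π*u : ℝ):ℂ)) ^ (-τ)) := by
    apply Continuous.mul continuous_const
    apply continuous_iff_continuousAt.2
    intro u
    have h2 : ContinuousAt (fun u : ℝ => (1/2 + Complex.I * ((2*π*u:ℝ):ℂ) : ℂ)) u := by fun_prop
    exact ContinuousAt.cpow h2 continuousAt_const (Or.inl (by rw [rep]; norm_num))
  refine Integrable.mono' (((integrable_bound hτ).const_mul
    (‖Complex.Gamma τ‖ * Real.exp (π / 2 * |τ.im|)))) hcont.aestronglyMeasurable ?_
  filter_upwards with u
  have h2 := norm_cpow_line_le (rep (2*π*u)) (show 0 ≤ τ.re by linarith)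
  rw [imp] at h2
  have h3 : ((1 + |2*π*u|) / 4 : ℝ) ^ (-τ.re) ≤ ((1 + |u|) / 4) ^ (-τ.re) := by
    apply Real.rpow_le_rpow_of_nonpos (by positivity) ?_ (by linarith)
    have : |u| ≤ |2*π*u| := by
      rw [abs_mul, abs_of_pos (show (0:ℝ) < 2*π from by positivity)]
      nlinarith [abs_nonneg u, Real.pi_gt_three]
    linarith
  calc ‖Complex.Gamma τ * (1/2 + Complex.I * ((2*π*u : ℝ):ℂ)) ^ (-τ)‖
      = ‖Complex.Gamma τ‖ * ‖(1/2 + Complex.I * ((2*π*u : ℝ):ℂ)) ^ (-τ)‖ := norm_mul _ _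
    _ ≤ ‖Complex.Gamma τ‖ * (Real.exp (π / 2 * |τ.im|) * ((1 + |u|) / 4) ^ (-τ.re)) := by
        apply mul_le_mul_of_nonneg_left ?_ (norm_nonneg _)
        refine le_trans h2 ?_
        exact mul_le_mul_of_nonneg_left h3 (Real.exp_pos _).le
    _ = ‖Complex.Gamma τ‖ * Real.exp (π / 2 * |τ.im|) * ((1 + |u|) / 4) ^ (-τ.re) := by ring

lemma J_eval {τ : ℂ} (hτ : 1 < τ.re) {t : ℝ} (ht : 0 < t) :
    ∫ x : ℝ, zm x (-τ) * Complex.exp (-(Complex.I * t * x))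
      = 2 * π * ((t:ℂ) ^ (τ - 1) * Complex.exp (-((1/2:ℂ) * t))) / Complex.Gamma τ := by
  have hτ0 : 0 < τ.re := by linarith
  have hΓ : Complex.Gamma τ ≠ 0 := Complex.Gamma_ne_zero_of_re_pos hτ0
  -- Fourier inversion
  have hcont : ContinuousAt (kerG τ) t := by
    have hev : kerG τ =ᶠ[𝓝 t] (fun s : ℝ => (s:ℂ) ^ (τ - 1) * Complex.exp (-((1/2 : ℂ) * s))) := by
      filter_upwards [isOpen_Ioi.mem_nhds (show t ∈ Ioi (0:ℝ) from ht)] with s hs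
      exact indicator_of_mem hs _
    apply ContinuousAt.congr ?_ hev.symm
    apply ContinuousAt.mul
    · exact ContinuousAt.cpow Complex.continuous_ofReal.continuousAt continuousAt_const
        (Or.inl (by simpa using ht))
    · fun_prop
  have hinv := (integrable_kerG hτ0).fourierInv_fourier_eq (integrable_fourier_kerG hτ) hcont
  -- rewrite 𝓕⁻ as an explicit integral
  have hinv2 : ∫ u : ℝ, Complex.exp (↑(2 * π * u * t) * Complex.I) • 𝓕 (kerG τ) u
      = kerG τ t := by
    rw [← hinv, Real.fourierInv_eq_fourier_neg,
      Real.fourier_real_eq_integral_exp_smul]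
    congr 1
    ext u
    congr 2
    push_cast; ring
  -- change of variables
  have hcv := MeasureTheory.Measure.integral_comp_mul_left
    (fun x : ℝ => zm x (-τ) * Complex.exp (-(Complex.I * t * x))) (-(2*π))
  rw [show |(-(2*π))⁻¹| = (2*π)⁻¹ by rw [abs_inv, abs_neg, abs_of_pos (by positivity)]] at hcv
  have hpt : ∀ u : ℝ, zm (-(2*π) * u) (-τ)
        * Complex.exp (-(Complex.I * t * ((-(2*π) * u : ℝ) : ℂ)))
      = (Complex.Gamma τ)⁻¹ * (Complex.exp (↑(2 * π * u * t) * Complex.I) • 𝓕 (kerG τ) u) := by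
    intro u
    rw [fourier_kerG hτ0, smul_eq_mul]
    have hz : zm (-(2*π) * u) (-τ) = (1/2 + Complex.I * ((2*π*u : ℝ):ℂ)) ^ (-τ) := by
      rw [zm_eq]
      congr 2
      push_cast; ring
    rw [hz]
    have he : Complex.exp (-(Complex.I * t * ((-(2*π) * u : ℝ) : ℂ)))
        = Complex.exp (↑(2 * π * u * t) * Complex.I) := by
      congr 1; push_cast; ring
    rw [he]
    field_simp
  have hker : kerG τ t = (t:ℂ) ^ (τ - 1) * Complex.exp (-((1/2:ℂ) * t)) :=
    indicator_of_mem (show t ∈ Ioi (0:ℝ) from ht) _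
  calc ∫ x : ℝ, zm x (-τ) * Complex.exp (-(Complex.I * t * x))
      = (2*π) • ∫ x : ℝ, zm (-(2*π) * x) (-τ)
          * Complex.exp (-(Complex.I * t * ((-(2*π) * x : ℝ) : ℂ))) := by
        rw [hcv, smul_smul, mul_inv_cancel₀ (by positivity), one_smul]
    _ = (2*π) • ∫ x : ℝ, (Complex.Gamma τ)⁻¹
          * (Complex.exp (↑(2 * π * x * t) * Complex.I) • 𝓕 (kerG τ) x) := by
        congr 1
        exact integral_congr_ae (Filter.Eventually.of_forall hpt)
    _ = (2*π) • ((Complex.Gamma τ)⁻¹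
          * ∫ x : ℝ, Complex.exp (↑(2 * π * x * t) * Complex.I) • 𝓕 (kerG τ) x) := by
        rw [MeasureTheory.integral_const_mul]
    _ = (2*π) • ((Complex.Gamma τ)⁻¹ * kerG τ t) := by rw [hinv2]
    _ = 2 * π * ((t:ℂ) ^ (τ - 1) * Complex.exp (-((1/2:ℂ) * t))) / Complex.Gamma τ := by
        rw [hker, real_smul]
        push_cast
        field_simp

lemma main_region {σ τ : ℂ} (hσ : 0 < σ.re) (hτ : 1 < τ.re) :
    ∫ x : ℝ, zp x (-σ) * zm x (-τ)
      = 2 * π * Complex.Gamma (σ + τ - 1) / (Complex.Gamma σ * Complex.Gamma τ) := by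
  have hΓσ : Complex.Gamma σ ≠ 0 := Complex.Gamma_ne_zero_of_re_pos hσ
  have hΓτ : Complex.Gamma τ ≠ 0 := Complex.Gamma_ne_zero_of_re_pos (by linarith)
  set Φ : ℝ → ℝ → ℂ := fun x t => zm x (-τ)
    * ((t:ℂ) ^ (σ - 1) * Complex.exp (-((1/2 + Complex.I * x) * t))) with hΦ
  -- Step 1: pointwise Laplace representation
  have hpt : ∀ x : ℝ, zp x (-σ) * zm x (-τ)
      = (Complex.Gamma σ)⁻¹ * ∫ t in Ioi (0:ℝ), Φ x t := by
    intro x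
    rw [hΦ]
    simp only
    rw [MeasureTheory.integral_const_mul, laplace hσ (by rw [rep]; norm_num), zp_eq]
    field_simp
  -- Step 2: Fubini
  have hmeas : (volume : Measure ℝ).prod (volume.restrict (Ioi (0:ℝ)))
      = ((volume : Measure ℝ).prod (volume : Measure ℝ)).restrict ((univ : Set ℝ) ×ˢ Ioi (0:ℝ)) := by
    rw [← Measure.prod_restrict (univ : Set ℝ) (Ioi (0:ℝ)), Measure.restrict_univ]
  have hint : Integrable (Function.uncurry Φ) (volume.prod (volume.restrict (Ioi (0:ℝ)))) := by
    have hbnd : Integrable (fun p : ℝ × ℝ => ‖zm p.1 (-τ)‖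
        * (p.2 ^ (σ.re - 1) * Real.exp (-(1/2 * p.2))))
        (volume.prod (volume.restrict (Ioi (0:ℝ)))) := by
      refine Integrable.mul_prod (f := fun x => ‖zm x (-τ)‖)
        (g := fun t : ℝ => t ^ (σ.re - 1) * Real.exp (-(1/2 * t)))
        (integrable_zm hτ).norm ?_
      have := integrableOn_rpow_mul_exp_neg_mul_rpow (by linarith : (-1:ℝ) < σ.re - 1)
        zero_lt_one (by norm_num : (0:ℝ) < 1/2)
      refine (this.congr_fun ?_ measurableSet_Ioi)
      intro t ht
      simp only [Real.rpow_one]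
      ring_nf
    have hcont : ContinuousOn (Function.uncurry Φ) (univ ×ˢ Ioi (0:ℝ)) := by
      apply ContinuousOn.mul
      · exact ((continuous_zm (-τ)).comp continuous_fst).continuousOn
      · apply ContinuousOn.mul
        · intro p hp
          have hp2 : (0:ℝ) < p.2 := (mem_prod.1 hp).2
          apply ContinuousAt.continuousWithinAt
          exact ContinuousAt.cpow
            (Complex.continuous_ofReal.continuousAt.comp continuousAt_snd)
            continuousAt_const (Or.inl (by simpa using hp2))
        · apply Continuous.continuousOn
          apply Complex.continuous_exp.comp
          fun_prop
    have hmeas2 : AEStronglyMeasurable (Function.uncurry Φ)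
        (volume.prod (volume.restrict (Ioi (0:ℝ)))) := by
      rw [hmeas]
      exact hcont.aestronglyMeasurable (MeasurableSet.univ.prod measurableSet_Ioi)
    refine Integrable.mono' hbnd hmeas2 ?_
    rw [hmeas]
    filter_upwards [ae_restrict_mem (MeasurableSet.univ.prod measurableSet_Ioi)] with p hp
    have hp2 : (0:ℝ) < p.2 := (mem_prod.1 hp).2
    rw [Function.uncurry, hΦ]
    simp only
    rw [norm_mul, norm_laplace hp2 σ (1/2 + Complex.I * p.1), rep]
  have hswap := MeasureTheory.integral_integral_swap hint
  -- Step 3: inner integral evaluation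
  have hinner : ∀ t ∈ Ioi (0:ℝ), (∫ x : ℝ, Φ x t)
      = (2 * π / Complex.Gamma τ)
        * ((t:ℂ) ^ ((σ + τ - 1) - 1) * Complex.exp (-((1:ℂ) * t))) := by
    intro t ht
    have ht' : (0:ℝ) < t := ht
    have hsplit : ∀ x : ℝ, Φ x t = ((t:ℂ) ^ (σ - 1) * Complex.exp (-((1/2:ℂ) * t)))
        * (zm x (-τ) * Complex.exp (-(Complex.I * t * x))) := by
      intro x
      rw [hΦ]
      simp only
      rw [show (-((1/2 + Complex.I * x) * t) : ℂ)
          = (-((1/2:ℂ) * t)) + (-(Complex.I * t * x)) by push_cast; ring, Complex.exp_add]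
      ring
    rw [integral_congr_ae (Filter.Eventually.of_forall hsplit),
      MeasureTheory.integral_const_mul, J_eval hτ ht']
    have hcpow : ((t:ℂ)) ^ ((σ + τ - 1) - 1) = (t:ℂ) ^ (σ - 1) * (t:ℂ) ^ (τ - 1) := by
      rw [← Complex.cpow_add _ _ (by exact_mod_cast ht'.ne')]
      congr 1
      ring
    have hexp : Complex.exp (-((1:ℂ) * t))
        = Complex.exp (-((1/2:ℂ) * t)) * Complex.exp (-((1/2:ℂ) * t)) := by
      rw [← Complex.exp_add]
      congr 1
      push_cast; ring
    rw [hcpow, hexp]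
    field_simp
  -- Step 4: put everything together
  calc ∫ x : ℝ, zp x (-σ) * zm x (-τ)
      = ∫ x : ℝ, (Complex.Gamma σ)⁻¹ * ∫ t in Ioi (0:ℝ), Φ x t :=
        integral_congr_ae (Filter.Eventually.of_forall hpt)
    _ = (Complex.Gamma σ)⁻¹ * ∫ x : ℝ, ∫ t in Ioi (0:ℝ), Φ x t :=
        MeasureTheory.integral_const_mul _ _
    _ = (Complex.Gamma σ)⁻¹ * ∫ t in Ioi (0:ℝ), ∫ x : ℝ, Φ x t := by rw [hswap]
    _ = (Complex.Gamma σ)⁻¹ * ∫ t in Ioi (0:ℝ), (2 * π / Complex.Gamma τ)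
        * ((t:ℂ) ^ ((σ + τ - 1) - 1) * Complex.exp (-((1:ℂ) * t))) := by
        rw [setIntegral_congr_fun measurableSet_Ioi hinner]
    _ = (Complex.Gamma σ)⁻¹ * ((2 * π / Complex.Gamma τ)
        * (Complex.Gamma (σ + τ - 1) * (1:ℂ) ^ (-(σ + τ - 1)))) := by
        rw [MeasureTheory.integral_const_mul, laplace (by simp; linarith) (by norm_num)]
    _ = 2 * π * Complex.Gamma (σ + τ - 1) / (Complex.Gamma σ * Complex.Gamma τ) := by
        rw [Complex.one_cpow]
        field_simp

noncomputable def dd (x : ℝ) : ℂ :=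
  Complex.log (1/2 - Complex.I * x) - Complex.log (1/2 + Complex.I * x)

lemma dd_re (x : ℝ) : (dd x).re = 0 := by
  rw [dd, Complex.sub_re, Complex.log_re, Complex.log_re]
  have : ‖(1/2 - Complex.I * x : ℂ)‖ = ‖(1/2 + Complex.I * x : ℂ)‖ := by
    rw [show (1/2 - Complex.I * x : ℂ) = starRingEnd ℂ (1/2 + Complex.I * x) by
      simp [Complex.ext_iff], Complex.norm_conj]
  rw [this, sub_self]

lemma dd_norm (x : ℝ) : ‖dd x‖ ≤ 2 * π := by
  have h1 := Complex.norm_le_abs_re_add_abs_im (dd x)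
  rw [dd_re, abs_zero, zero_add] at h1
  refine h1.trans ?_
  rw [dd, Complex.sub_im, Complex.log_im, Complex.log_im]
  have h2 := Complex.abs_arg_le_pi (1/2 - Complex.I * x)
  have h3 := Complex.abs_arg_le_pi (1/2 + Complex.I * x)
  rw [abs_sub_comm] at *
  calc |(1/2 + Complex.I * ↑x : ℂ).arg - (1/2 - Complex.I * ↑x : ℂ).arg|
      ≤ |(1/2 + Complex.I * ↑x : ℂ).arg| + |(1/2 - Complex.I * ↑x : ℂ).arg| := abs_sub _ _
    _ ≤ 2 * π := by linarith

lemma factor (s z : ℂ) (x : ℝ) :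
    zp x (-z) * zm x (-(s - z)) = zm x (-s) * Complex.exp (z * dd x) := by
  rw [zp, zm, zm, dd, ← Complex.exp_add, ← Complex.exp_add]
  congr 1
  ring

lemma re_mul_dd (z : ℂ) (x : ℝ) : (z * dd x).re ≤ |z.im| * (2 * π) := by
  rw [Complex.mul_re, dd_re, mul_zero, zero_sub]
  calc -(z.im * (dd x).im) ≤ |z.im * (dd x).im| := neg_le_abs _
    _ = |z.im| * |(dd x).im| := abs_mul _ _
    _ ≤ |z.im| * (2 * π) := by
        apply mul_le_mul_of_nonneg_left ?_ (abs_nonneg _)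
        have := dd_norm x
        have h2 := Complex.abs_im_le_norm (dd x)
        linarith

lemma continuous_dd : Continuous dd := by
  apply continuous_iff_continuousAt.2
  intro x
  apply ContinuousAt.sub
  · exact (continuousAt_clog (Or.inl (by rw [rem]; norm_num))).comp (by fun_prop)
  · exact (continuousAt_clog (Or.inl (by rw [rep]; norm_num))).comp (by fun_prop)

lemma F_entire {s : ℂ} (hs : 1 < s.re) :
    Differentiable ℂ (fun z : ℂ => ∫ x : ℝ, zm x (-s) * Complex.exp (z * dd x)) := by
  intro z₀
  have key := hasDerivAt_integral_of_dominated_loc_of_deriv_le (μ := (volume : Measure ℝ))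
    (F := fun (z : ℂ) (x : ℝ) => zm x (-s) * Complex.exp (z * dd x))
    (F' := fun (z : ℂ) (x : ℝ) => zm x (-s) * (Complex.exp (z * dd x) * dd x))
    (x₀ := z₀)
    (bound := fun x : ℝ => ‖zm x (-s)‖ * (Real.exp ((|z₀.im| + 1) * (2 * π)) * (2 * π)))
    (Metric.ball_mem_nhds z₀ one_pos) ?_ ?_ ?_ ?_ ?_ ?_
  · exact key.2.differentiableAt
  · filter_upwards with z
    apply Continuous.aestronglyMeasurable
    exact (continuous_zm (-s)).mul (Complex.continuous_exp.comp (continuous_const.mul continuous_dd))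
  · -- integrability at z₀
    refine Integrable.mono' ((integrable_zm hs).norm.mul_const
      (Real.exp ((|z₀.im| + 1) * (2 * π)))) ?_ ?_
    · exact ((continuous_zm (-s)).mul
        (Complex.continuous_exp.comp (continuous_const.mul continuous_dd))).aestronglyMeasurable
    · filter_upwards with x
      rw [norm_mul]
      apply mul_le_mul_of_nonneg_left ?_ (norm_nonneg _)
      rw [Complex.norm_exp]
      apply Real.exp_le_exp.2
      have := re_mul_dd z₀ x
      nlinarith [Real.pi_pos, abs_nonneg z₀.im]
  · apply Continuous.aestronglyMeasurable
    exact (continuous_zm (-s)).mul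
      ((Complex.continuous_exp.comp (continuous_const.mul continuous_dd)).mul continuous_dd)
  · filter_upwards with x z hz
    rw [norm_mul, norm_mul]
    apply mul_le_mul_of_nonneg_left ?_ (norm_nonneg _)
    have h1 : ‖Complex.exp (z * dd x)‖ ≤ Real.exp ((|z₀.im| + 1) * (2 * π)) := by
      rw [Complex.norm_exp]
      apply Real.exp_le_exp.2
      have h2 := re_mul_dd z x
      have h3 : |z.im| ≤ |z₀.im| + 1 := by
        have h4 : |z.im - z₀.im| ≤ ‖z - z₀‖ := by
          rw [← Complex.sub_im]
          exact Complex.abs_im_le_norm _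
        have h5 : ‖z - z₀‖ < 1 := by simpa [Metric.mem_ball, dist_eq_norm] using hz
        have := abs_sub_abs_le_abs_sub z.im z₀.im
        linarith
      nlinarith [Real.pi_pos]
    exact mul_le_mul h1 (dd_norm x) (norm_nonneg _) (Real.exp_pos _).le
  · exact (integrable_zm hs).norm.mul_const _
  · filter_upwards with x z hz
    have hd : HasDerivAt (fun z : ℂ => z * dd x) (dd x) z := hasDerivAt_mul_const (dd x)
    simpa using (hd.cexp.const_mul (zm x (-s)))

/-- The Cauchy beta integral:
`∫_ℝ (1/2+ix)^{-σ} (1/2-ix)^{-τ} dx = 2π Γ(σ+τ-1)/(Γ(σ)Γ(τ))` for `Re(σ+τ) > 1`. -/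
theorem stmt1 (σ τ : ℂ) (h : 1 < (σ + τ).re) :
    ∫ x : ℝ, zp x (-σ) * zm x (-τ)
      = 2 * Real.pi * Complex.Gamma (σ + τ - 1) / (Complex.Gamma σ * Complex.Gamma τ) := by
  set s : ℂ := σ + τ with hsdef
  set F : ℂ → ℂ := fun z => ∫ x : ℝ, zp x (-z) * zm x (-(s - z)) with hF
  set G : ℂ → ℂ := fun z => 2 * π * Complex.Gamma (s - 1)
      * (Complex.Gamma z)⁻¹ * (Complex.Gamma (s - z))⁻¹ with hG
  have hFd : Differentiable ℂ F := by
    have : F = fun z : ℂ => ∫ x : ℝ, zm x (-s) * Complex.exp (z * dd x) := by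
      funext z
      exact integral_congr_ae (Filter.Eventually.of_forall fun x => factor s z x)
    rw [this]
    exact F_entire h
  have hGd : Differentiable ℂ G := by
    apply Differentiable.mul
    · apply Differentiable.mul (differentiable_const _)
      exact Complex.differentiable_one_div_Gamma
    · exact Complex.differentiable_one_div_Gamma.comp
        ((differentiable_const s).sub differentiable_id)
  set S : Set ℂ := {z : ℂ | 0 < z.re ∧ 1 < (s - z).re} with hS
  have hSo : IsOpen S := by
    apply IsOpen.inter
    · exact isOpen_lt continuous_const Complex.continuous_re
    · exact isOpen_lt continuous_const
        (Complex.continuous_re.comp (continuous_const.sub continuous_id))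
  have hz₀ : (((s.re - 1)/2 : ℝ) : ℂ) ∈ S := by
    constructor
    · simp only [Complex.ofReal_re]
      linarith
    · simp only [Complex.sub_re, Complex.ofReal_re]
      linarith
  have hEq : EqOn F G S := by
    intro z hz
    obtain ⟨hz1, hz2⟩ := hz
    have := main_region hz1 hz2
    rw [hF, hG]
    simp only
    rw [this, show z + (s - z) - 1 = s - 1 by ring]
    rw [div_eq_mul_inv, mul_inv]
    ring
  have hid := (hFd.differentiableOn.analyticOnNhd isOpen_univ).eqOn_of_preconnected_of_eventuallyEq
    (hGd.differentiableOn.analyticOnNhd isOpen_univ) isPreconnected_univ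
    (mem_univ (((s.re - 1)/2 : ℝ) : ℂ))
    (eventually_of_mem (hSo.mem_nhds hz₀) hEq) (mem_univ σ)
  have hsσ : s - σ = τ := by rw [hsdef]; ring
  have hFσ : F σ = ∫ x : ℝ, zp x (-σ) * zm x (-τ) := by rw [hF]; simp only [hsσ]
  have hGσ : G σ = 2 * Real.pi * Complex.Gamma (σ + τ - 1)
      / (Complex.Gamma σ * Complex.Gamma τ) := by
    rw [hG]
    simp only [hsσ, ← hsdef]
    rw [div_eq_mul_inv, mul_inv]
    ring
  rw [← hFσ, hid, hGσ]
end

section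
/- Let α, β ∈ ℝ with α+iβ ∉ ℤ, and let μ ∈ ℂ. For x ∈ ℝ with x² < 3/4 define S₁(x) := (1/2+ix)^{−(α+iβ)/2}·(1/2−ix)^{−(α−iβ)/2}·₂F₁[1/2−α+μ, 1/2−α−μ; 1−α−iβ; 1/2+ix] and S₂(x) := (1/2+ix)^{(α+iβ)/2}·(1/2−ix)^{(α−iβ)/2}·₂F₁[1/2+α+μ, 1/2+α−μ; 1+α+iβ; 1/2+ix] (the hypergeometric series converge since |1/2+ix|² = 1/4+x² < 1). Then S₁ and S₂ are differentiable on (−√3/2, √3/2) and their Wronskian satisfies S₁(x)·S₂′(x) − S₂(x)·S₁′(x) = i(α+iβ)/(1/4+x²) for all x ∈ (−√3/2, √3/2). -/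
open MeasureTheory Complex

/-- The Pochhammer symbol `(a)_k = a (a+1) ⋯ (a+k-1)`. -/
noncomputable def poch (a : ℂ) (k : ℕ) : ℂ := ∏ i ∈ Finset.range k, (a + i)

/-- The Gauss hypergeometric series `₂F₁[a,b;c;z]` (convergent for `|z| < 1`). -/
noncomputable def F21 (a b c z : ℂ) : ℂ :=
  ∑' k : ℕ, poch a k * poch b k / (poch c k * (Nat.factorial k)) * z^k

/-- The Kummer solution `S₁` of the hypergeometric operator `D` on `Re z = 1/2`. -/
noncomputable def S1 (α β : ℝ) (μ : ℂ) (x : ℝ) : ℂ :=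
  zp x (-((α : ℂ) + Complex.I*β)/2) * zm x (-((α : ℂ) - Complex.I*β)/2) *
    F21 (1/2 - α + μ) (1/2 - α - μ) (1 - α - Complex.I*β) (1/2 + Complex.I*x)

/-- The Kummer solution `S₂ = S₁(-α,-β)` of the hypergeometric operator `D`. -/
noncomputable def S2 (α β : ℝ) (μ : ℂ) (x : ℝ) : ℂ :=
  zp x (((α : ℂ) + Complex.I*β)/2) * zm x (((α : ℂ) - Complex.I*β)/2) *
    F21 (1/2 + α + μ) (1/2 + α - μ) (1 + α + Complex.I*β) (1/2 + Complex.I*x)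

namespace Stmt7Aux

open Filter Topology

/-! ### Coefficients of the hypergeometric series -/

noncomputable def hgt (a b c : ℂ) (k : ℕ) : ℂ :=
  poch a k * poch b k / (poch c k * (Nat.factorial k))

lemma poch_succ (a : ℂ) (k : ℕ) : poch a (k+1) = poch a k * (a + k) :=
  Finset.prod_range_succ _ _

lemma poch_ne_zero {c : ℂ} (hc : ∀ k : ℕ, c + k ≠ 0) (k : ℕ) : poch c k ≠ 0 :=
  Finset.prod_ne_zero_iff.2 fun i _ => hc i

lemma hgt_succ {c : ℂ} (hc : ∀ k : ℕ, c + k ≠ 0) (a b : ℂ) (k : ℕ) :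
    hgt a b c (k+1) = hgt a b c k * ((a+k)*(b+k)/((c+k)*(k+1))) := by
  have h1 : poch c k ≠ 0 := poch_ne_zero hc k
  have h2 : (c + k) ≠ 0 := hc k
  have h3 : ((Nat.factorial k : ℂ)) ≠ 0 := Nat.cast_ne_zero.2 (Nat.factorial_ne_zero k)
  have h4 : ((k:ℂ)+1) ≠ 0 := Nat.cast_add_one_ne_zero k
  rw [hgt, hgt, poch_succ, poch_succ, poch_succ, Nat.factorial_succ]
  push_cast
  field_simp

lemma hgt_rec {c : ℂ} (hc : ∀ k : ℕ, c + k ≠ 0) (a b : ℂ) (k : ℕ) :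
    ((k:ℂ)+1) * (c+k) * hgt a b c (k+1) = (a+k)*(b+k) * hgt a b c k := by
  rw [hgt_succ hc a b k]
  have h2 : (c + k) ≠ 0 := hc k
  have h4 : ((k:ℂ)+1) ≠ 0 := Nat.cast_add_one_ne_zero k
  field_simp

/-! ### Summability framework -/

def H (c : ℕ → ℂ) : Prop := ∀ r : ℝ, 0 < r → r < 1 → Summable (fun k => ‖c k‖ * r ^ k)

lemma H.congr {c c' : ℕ → ℂ} (h : H c) (e : ∀ k, c' k = c k) : H c' := by
  intro r hr0 hr1
  exact (h r hr0 hr1).congr fun k => by rw [e k]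

lemma H.summable {c : ℕ → ℂ} (h : H c) {z : ℂ} (hz : ‖z‖ < 1) :
    Summable (fun k => c k * z ^ k) := by
  have h0 := norm_nonneg z
  set r := (‖z‖ + 1) / 2 with hr
  have hr0 : 0 < r := by positivity
  have hr1 : r < 1 := by rw [hr]; linarith
  refine Summable.of_norm_bounded (h r hr0 hr1) fun k => ?_
  rw [norm_mul, norm_pow]
  gcongr
  rw [hr]; linarith

lemma H.mul_shift {c : ℕ → ℂ} (h : H c) (d : ℂ) (j : ℕ) :
    H (fun k => ((k:ℂ) + d) * c (k + j)) := by
  intro r hr0 hr1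
  set ρ := (r+1)/2 with hρ
  have hρ0 : 0 < ρ := by positivity
  have hρ1 : ρ < 1 := by rw [hρ]; linarith
  have hrρ : r < ρ := by rw [hρ]; linarith
  have hs : Summable (fun k => ‖c (k+j)‖ * ρ^(k+j)) :=
    (summable_nat_add_iff j).2 (h ρ hρ0 hρ1)
  have hq0 : 0 ≤ r/ρ := by positivity
  have hq1 : r/ρ < 1 := (div_lt_one hρ0).2 hrρ
  have hT : Tendsto (fun k : ℕ => ((k:ℝ) + ‖d‖) * (r/ρ)^k) atTop (𝓝 0) := by
    have t1 := tendsto_self_mul_const_pow_of_lt_one hq0 hq1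
    have t2 := (tendsto_pow_atTop_nhds_zero_of_lt_one hq0 hq1).const_mul ‖d‖
    have := t1.add t2
    simp only [add_zero, mul_zero] at this
    apply this.congr
    intro k; ring
  obtain ⟨C, hC⟩ := hT.bddAbove_range
  have hCmem : ∀ k : ℕ, ((k:ℝ) + ‖d‖) * (r/ρ)^k ≤ C := fun k =>
    hC (Set.mem_range_self k)
  refine Summable.of_nonneg_of_le (fun k => by positivity) (fun k => ?_) (hs.mul_left (C/ρ^j))
  · simp only
    have h1 : ‖((k:ℂ) + d)‖ ≤ (k:ℝ) + ‖d‖ := by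
      calc ‖((k:ℂ) + d)‖ ≤ ‖((k:ℕ):ℂ)‖ + ‖d‖ := norm_add_le _ _
        _ = (k:ℝ) + ‖d‖ := by rw [Complex.norm_natCast]
    have hrw : r^k = (r/ρ)^k * ρ^k := by
      rw [div_pow, div_mul_cancel₀]
      positivity
    have hρk : ρ^(k+j) = ρ^k * ρ^j := pow_add ρ k j
    rw [norm_mul, hrw]
    calc ‖((k:ℂ)+d)‖ * ‖c (k+j)‖ * ((r/ρ)^k * ρ^k)
        = (‖((k:ℂ)+d)‖ * (r/ρ)^k) * (‖c (k+j)‖ * ρ^k) := by ring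
      _ ≤ C * (‖c (k+j)‖ * ρ^k) := by
          apply mul_le_mul_of_nonneg_right _ (by positivity)
          calc ‖((k:ℂ)+d)‖ * (r/ρ)^k ≤ ((k:ℝ) + ‖d‖) * (r/ρ)^k := by
                apply mul_le_mul_of_nonneg_right h1 (by positivity)
            _ ≤ C := hCmem k
      _ = (C/ρ^j) * (‖c (k+j)‖ * ρ^(k+j)) := by
          rw [hρk]; field_simp

/-! ### Limit lemmas -/

lemma norm_shift_ge (d : ℂ) (k : ℕ) : (k : ℝ) - ‖d‖ ≤ ‖d + k‖ := by
  have h := norm_add_le (d + (k:ℂ)) (-d)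
  have h1 : d + (k:ℂ) + -d = (k:ℂ) := by ring
  rw [h1, Complex.norm_natCast, norm_neg] at h
  linarith

lemma eventually_shift_ne (d : ℂ) : ∀ᶠ k : ℕ in atTop, (d + (k:ℂ)) ≠ 0 := by
  filter_upwards [eventually_gt_atTop ⌈‖d‖⌉₊] with k hk h0
  have h1 := norm_shift_ge d k
  rw [h0, norm_zero] at h1
  have h2 : (⌈‖d‖⌉₊ : ℝ) < k := by exact_mod_cast hk
  have := Nat.le_ceil ‖d‖
  linarith

lemma inv_shift_tendsto (d : ℂ) : Tendsto (fun k : ℕ => ((d + k)⁻¹ : ℂ)) atTop (𝓝 0) := by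
  rw [tendsto_zero_iff_norm_tendsto_zero]
  have hnorm : Tendsto (fun k : ℕ => ‖(d + k : ℂ)‖) atTop atTop := by
    apply tendsto_atTop_mono' atTop (f₁ := fun k : ℕ => (k : ℝ) - ‖d‖)
    · filter_upwards with k
      exact norm_shift_ge d k
    · exact tendsto_atTop_add_const_right _ _ tendsto_natCast_atTop_atTop
  simpa [Pi.inv_def] using hnorm.inv_tendsto_atTop

lemma ratio_tendsto (a d : ℂ) : Tendsto (fun k : ℕ => ((a + k) / (d + k) : ℂ)) atTop (𝓝 1) := by
  have h := ((inv_shift_tendsto d).const_mul (a - d)).const_add (1:ℂ)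
  simp only [mul_zero, add_zero] at h
  apply h.congr'
  filter_upwards [eventually_shift_ne d] with k h0
  field_simp
  ring

lemma H_of_ratio {c : ℕ → ℂ} {q : ℕ → ℂ}
    (hrec : ∀ k, c (k+1) = c k * q k) (hq : Tendsto q atTop (𝓝 1)) : H c := by
  intro r hr0 hr1
  have hl1 : (1 + r)/2 < 1 := by linarith
  apply summable_of_ratio_norm_eventually_le hl1
  have hqn : Tendsto (fun k => ‖q k‖ * r) atTop (𝓝 r) := by
    simpa using (hq.norm.mul_const r)
  have hev : ∀ᶠ k in atTop, ‖q k‖ * r ≤ (1 + r)/2 := by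
    have : r < (1+r)/2 := by linarith
    filter_upwards [hqn.eventually_le_const this] with k hk using hk
  filter_upwards [hev] with k hk
  have h1 : ‖c (k+1)‖ = ‖c k‖ * ‖q k‖ := by rw [hrec k, norm_mul]
  have h2 : (0:ℝ) ≤ ‖c k‖ * r ^ k := by positivity
  have h3 : (0:ℝ) ≤ ‖c (k+1)‖ * r ^ (k+1) := by positivity
  rw [Real.norm_of_nonneg h3, Real.norm_of_nonneg h2, h1, pow_succ]
  calc ‖c k‖ * ‖q k‖ * (r^k * r) = (‖q k‖ * r) * (‖c k‖ * r^k) := by ring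
    _ ≤ ((1+r)/2) * (‖c k‖ * r^k) := by
        apply mul_le_mul_of_nonneg_right hk h2
    _ = (1+r)/2 * (‖c k‖ * r^k) := rfl

lemma H_hgt (a b : ℂ) {c : ℂ} (hc : ∀ k : ℕ, c + k ≠ 0) : H (hgt a b c) := by
  apply H_of_ratio (q := fun k => ((a+k)/(c+k)) * ((b+k)/(1+k)))
  · intro k
    rw [hgt_succ hc a b k]
    congr 1
    rw [div_mul_div_comm]
    ring_nf
  · have := (ratio_tendsto a c).mul (ratio_tendsto b 1)
    simpa using this

/-! ### Differentiation of power series -/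

lemma hasDerivAt_psum {c : ℕ → ℂ} (hc : H c) {z₀ : ℂ} (hz : ‖z₀‖ < 1) :
    HasDerivAt (fun z : ℂ => ∑' k, c k * z ^ k)
      (∑' k : ℕ, ((k:ℂ) + 1) * c (k+1) * z₀ ^ k) z₀ := by
  have h0 := norm_nonneg z₀
  set r := (‖z₀‖ + 1) / 2 with hrdef
  have hr0 : 0 < r := by positivity
  have hr1 : r < 1 := by rw [hrdef]; linarith
  have hzr : ‖z₀‖ < r := by rw [hrdef]; linarith
  have hcs : H (fun k => ((k:ℂ) + 1) * c (k+1)) := hc.mul_shift 1 1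
  have hzs : z₀ ∈ Metric.ball (0:ℂ) r := by
    simpa [Metric.mem_ball, dist_eq_norm] using hzr
  apply hasDerivAt_of_tendstoUniformlyOn (l := atTop)
      (f := fun N (z : ℂ) => ∑ k ∈ Finset.range (N+1), c k * z ^ k)
      (f' := fun N (z : ℂ) => ∑ k ∈ Finset.range N, ((k:ℂ) + 1) * c (k+1) * z ^ k)
      Metric.isOpen_ball ?_ ?_ ?_ hzs
  · apply tendstoUniformlyOn_tsum_nat (hcs r hr0 hr1)
    intro k z hzmem
    rw [Metric.mem_ball, dist_eq_norm, sub_zero] at hzmem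
    rw [norm_mul, norm_pow]
    exact mul_le_mul_of_nonneg_left (pow_le_pow_left₀ (norm_nonneg z) hzmem.le k) (norm_nonneg _)
  · filter_upwards with N z _
    have h1 : HasDerivAt (fun z : ℂ => ∑ k ∈ Finset.range (N+1), c k * z ^ k)
        (∑ k ∈ Finset.range (N+1), c k * ((k:ℂ) * z ^ (k-1))) z :=
      HasDerivAt.fun_sum fun k _ => (hasDerivAt_pow k z).const_mul (c k)
    convert h1 using 1
    case e'_4 => rfl
    case e'_5 => rfl
    rw [Finset.sum_range_succ']
    simp only [Nat.cast_zero, zero_mul, mul_zero, add_zero]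
    apply Finset.sum_congr rfl
    intro k _
    push_cast
    ring_nf
  · intro z hzmem
    rw [Metric.mem_ball, dist_eq_norm, sub_zero] at hzmem
    have hsum : Summable (fun k => c k * z ^ k) := hc.summable (hzmem.trans hr1)
    exact hsum.hasSum.tendsto_sum_nat.comp (tendsto_add_atTop_nat 1)

/-! ### The hypergeometric function and its derivatives -/

noncomputable def hu (a b c : ℂ) (k : ℕ) : ℂ := ((k:ℂ)+1) * hgt a b c (k+1)
noncomputable def F21d (a b c z : ℂ) : ℂ := ∑' k : ℕ, hu a b c k * z^k
noncomputable def F21dd (a b c z : ℂ) : ℂ := ∑' k : ℕ, ((k:ℂ)+1) * hu a b c (k+1) * z^k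

lemma H_hu (a b : ℂ) {c : ℂ} (hc : ∀ k : ℕ, c + k ≠ 0) : H (hu a b c) :=
  ((H_hgt a b hc).mul_shift 1 1).congr fun _ => rfl

lemma hasDerivAt_F21 (a b : ℂ) {c : ℂ} (hc : ∀ k : ℕ, c + k ≠ 0) {z : ℂ} (hz : ‖z‖ < 1) :
    HasDerivAt (fun w => F21 a b c w) (F21d a b c z) z :=
  hasDerivAt_psum (H_hgt a b hc) hz

lemma hasDerivAt_F21d (a b : ℂ) {c : ℂ} (hc : ∀ k : ℕ, c + k ≠ 0) {z : ℂ} (hz : ‖z‖ < 1) :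
    HasDerivAt (fun w => F21d a b c w) (F21dd a b c z) z :=
  hasDerivAt_psum (H_hu a b hc) hz

lemma SD (a b : ℂ) {c : ℂ} (hc : ∀ k : ℕ, c + k ≠ 0) (d : ℂ) {z : ℂ} (hz : ‖z‖ < 1) :
    z * F21dd a b c z + d * F21d a b c z = ∑' k : ℕ, ((k:ℂ)+d) * hu a b c k * z^k := by
  have Hu := H_hu a b hc
  have Hw : H (fun k => (k:ℂ) * hu a b c k) :=
    (Hu.mul_shift 0 0).congr fun k => by push_cast; ring
  have Sw : Summable (fun k : ℕ => (k:ℂ) * hu a b c k * z^k) := Hw.summable hz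
  have Sdu : Summable (fun k => d * (hu a b c k * z^k)) := (Hu.summable hz).mul_left d
  have step1 : z * F21dd a b c z = ∑' k : ℕ, (k:ℂ) * hu a b c k * z^k := by
    rw [F21dd, ← tsum_mul_left]
    rw [Summable.tsum_eq_zero_add Sw]
    simp only [Nat.cast_zero, zero_mul, zero_add]
    apply tsum_congr
    intro k
    push_cast
    ring
  have step2 : d * F21d a b c z = ∑' k : ℕ, d * (hu a b c k * z^k) := by
    rw [F21d, ← tsum_mul_left]
  rw [step1, step2, ← Summable.tsum_add Sw Sdu]
  apply tsum_congr
  intro k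
  ring

lemma ode (a b : ℂ) {c : ℂ} (hc : ∀ k : ℕ, c + k ≠ 0) {z : ℂ} (hz : ‖z‖ < 1) :
    z * F21dd a b c z + c * F21d a b c z
      = z * (z * F21dd a b c z + (a+b+1) * F21d a b c z) + a*b*F21 a b c z := by
  have Ht := H_hgt a b hc
  have Hm : H (fun k => ((k:ℂ)+a+b) * ((k:ℂ)) * hgt a b c k) := by
    have h1 : H (fun k => (k:ℂ) * hgt a b c k) :=
      (Ht.mul_shift 0 0).congr fun k => by push_cast; ring
    exact (h1.mul_shift (a+b) 0).congr fun k => by push_cast; ring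
  have Sm : Summable (fun k : ℕ => ((k:ℂ)+a+b) * ((k:ℂ)) * hgt a b c k * z^k) := Hm.summable hz
  have Sab : Summable (fun k => a*b*(hgt a b c k * z^k)) := (Ht.summable hz).mul_left _
  have hQ : z * (z * F21dd a b c z + (a+b+1) * F21d a b c z) + a*b*F21 a b c z
      = ∑' k : ℕ, ((k:ℂ)+a)*((k:ℂ)+b) * hgt a b c k * z^k := by
    rw [SD a b hc (a+b+1) hz, ← tsum_mul_left]
    have hF : F21 a b c z = ∑' k : ℕ, hgt a b c k * z^k := rfl
    rw [hF, ← tsum_mul_left]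
    have hzq : (∑' k : ℕ, z * (((k:ℂ)+(a+b+1)) * hu a b c k * z^k))
        = ∑' k : ℕ, ((k:ℂ)+a+b) * ((k:ℂ)) * hgt a b c k * z^k := by
      rw [Summable.tsum_eq_zero_add Sm]
      simp only [Nat.cast_zero, mul_zero, zero_mul, zero_add, add_zero]
      apply tsum_congr
      intro k
      rw [hu]
      push_cast
      ring
    rw [hzq, ← Summable.tsum_add Sm Sab]
    apply tsum_congr
    intro k
    ring
  rw [SD a b hc c hz, hQ]
  apply tsum_congr
  intro k
  have := hgt_rec hc a b k
  rw [hu]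
  linear_combination z^k * this

lemma F21_zero (a b c : ℂ) : F21 a b c 0 = 1 := by
  rw [F21]
  rw [tsum_eq_single 0 (fun k hk => by rw [zero_pow hk, mul_zero])]
  simp [poch]

/-! ### Constancy of the Wronskian-type combination `G` -/

lemma G_const (αc γ μ : ℂ) (hc1 : ∀ k : ℕ, (1-γ) + (k:ℂ) ≠ 0)
    (hc2 : ∀ k : ℕ, (1+γ) + (k:ℂ) ≠ 0) {z : ℂ} (hz : ‖z‖ < 1) :
    z*(1-z)*(F21 (1/2-αc+μ) (1/2-αc-μ) (1-γ) z * F21d (1/2+αc+μ) (1/2+αc-μ) (1+γ) z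
        - F21 (1/2+αc+μ) (1/2+αc-μ) (1+γ) z * F21d (1/2-αc+μ) (1/2-αc-μ) (1-γ) z)
      + (γ*(1-z) - (2*αc-γ)*z) * (F21 (1/2-αc+μ) (1/2-αc-μ) (1-γ) z
          * F21 (1/2+αc+μ) (1/2+αc-μ) (1+γ) z) = γ := by
  set a1 := 1/2-αc+μ with ha1
  set b1 := 1/2-αc-μ with hb1
  set a2 := 1/2+αc+μ with ha2
  set b2 := 1/2+αc-μ with hb2
  set G : ℂ → ℂ := fun w =>
    w*(1-w)*(F21 a1 b1 (1-γ) w * F21d a2 b2 (1+γ) w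
        - F21 a2 b2 (1+γ) w * F21d a1 b1 (1-γ) w)
      + (γ*(1-w) - (2*αc-γ)*w) * (F21 a1 b1 (1-γ) w * F21 a2 b2 (1+γ) w) with hGdef
  have key : ∀ w ∈ Metric.ball (0:ℂ) 1, HasDerivAt G 0 w := by
    intro w hw
    rw [Metric.mem_ball, dist_eq_norm, sub_zero] at hw
    have hA := hasDerivAt_F21 a1 b1 hc1 hw
    have hB := hasDerivAt_F21 a2 b2 hc2 hw
    have hAd := hasDerivAt_F21d a1 b1 hc1 hw
    have hBd := hasDerivAt_F21d a2 b2 hc2 hw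
    have h1 : HasDerivAt (fun w : ℂ => w * (1-w)) (1*(1-w) + w*(-1)) w :=
      (hasDerivAt_id w).mul ((hasDerivAt_id w).const_sub 1)
    have h2 := (hA.mul hBd).sub (hB.mul hAd)
    have h3 := h1.mul h2
    have h4 : HasDerivAt (fun w : ℂ => γ*(1-w) - (2*αc-γ)*w)
        (γ*(-1) - (2*αc-γ)*1) w := by
      have := (((hasDerivAt_id w).const_sub 1).const_mul γ).fun_sub
        (((hasDerivAt_id w)).const_mul (2*αc-γ))
      simpa using this
    have h5 := h4.mul (hA.mul hB)
    have hG := h3.add h5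
    have hE : (1*(1-w) + w*(-1)) * (F21 a1 b1 (1-γ) w * F21d a2 b2 (1+γ) w
          - F21 a2 b2 (1+γ) w * F21d a1 b1 (1-γ) w)
        + w*(1-w) * (F21d a1 b1 (1-γ) w * F21d a2 b2 (1+γ) w
            + F21 a1 b1 (1-γ) w * F21dd a2 b2 (1+γ) w
          - (F21d a2 b2 (1+γ) w * F21d a1 b1 (1-γ) w
            + F21 a2 b2 (1+γ) w * F21dd a1 b1 (1-γ) w))
        + ((γ*(-1) - (2*αc-γ)*1) * (F21 a1 b1 (1-γ) w * F21 a2 b2 (1+γ) w)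
          + (γ*(1-w) - (2*αc-γ)*w) * (F21d a1 b1 (1-γ) w * F21 a2 b2 (1+γ) w
            + F21 a1 b1 (1-γ) w * F21d a2 b2 (1+γ) w)) = 0 := by
      linear_combination (F21 a1 b1 (1-γ) w) * (ode a2 b2 hc2 hw)
        - (F21 a2 b2 (1+γ) w) * (ode a1 b1 hc1 hw)
    rw [hGdef]
    exact hE ▸ hG
  have h0mem : (0:ℂ) ∈ Metric.ball (0:ℂ) 1 := by simp
  have hzmem : z ∈ Metric.ball (0:ℂ) 1 := by
    simpa [Metric.mem_ball, dist_eq_norm] using hz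
  have hconst : G z = G 0 := by
    apply (convex_ball (0:ℂ) 1).is_const_of_fderivWithin_eq_zero (𝕜 := ℂ)
      (fun w hw => ((key w hw).differentiableAt).differentiableWithinAt)
      (fun w hw => ?_) hzmem h0mem
    rw [fderivWithin_of_isOpen Metric.isOpen_ball hw]
    have := ((key w hw).hasFDerivAt).fderiv
    rw [this]
    ext v
    simp
  have hG0 : G 0 = γ := by
    rw [hGdef]
    simp only [F21_zero]
    ring
  calc G z = G 0 := hconst
    _ = γ := hG0

/-! ### Real derivatives of the factors -/

lemma comp_real {h : ℂ → ℂ} {h' : ℂ} {f : ℝ → ℂ} {f' : ℂ} {x : ℝ}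
    (hh : HasDerivAt h h' (f x)) (hf : HasDerivAt f f' x) :
    HasDerivAt (fun y => h (f y)) (f' * h') x := by
  have B := (hh.hasFDerivAt.restrictScalars ℝ).comp_hasDerivAt x hf
  simpa [mul_comm, Function.comp_def] using B

lemma hasDerivAt_zeta (x : ℝ) :
    HasDerivAt (fun y : ℝ => 1/2 + Complex.I * y) Complex.I x := by
  have h1 : HasDerivAt (fun y : ℝ => (y : ℂ)) 1 x := by
    simpa using (hasDerivAt_id x).ofReal_comp
  simpa using (h1.const_mul Complex.I).const_add (1/2 : ℂ)

lemma hasDerivAt_xi (x : ℝ) :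
    HasDerivAt (fun y : ℝ => 1/2 - Complex.I * y) (-Complex.I) x := by
  have h1 : HasDerivAt (fun y : ℝ => (y : ℂ)) 1 x := by
    simpa using (hasDerivAt_id x).ofReal_comp
  simpa using (h1.const_mul Complex.I).const_sub (1/2 : ℂ)

lemma zeta_slit (x : ℝ) : (1/2 + Complex.I * x : ℂ) ∈ Complex.slitPlane := by
  apply Complex.mem_slitPlane_iff.2
  left
  simp

lemma xi_slit (x : ℝ) : (1/2 - Complex.I * x : ℂ) ∈ Complex.slitPlane := by
  apply Complex.mem_slitPlane_iff.2
  left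
  simp

lemma hasDerivAt_zp (x : ℝ) (lam : ℂ) :
    HasDerivAt (fun y : ℝ => zp y lam)
      (Complex.I * (zp x lam * (lam * (1/2 + Complex.I * x)⁻¹))) x := by
  have houter : HasDerivAt (fun w : ℂ => Complex.exp (lam * Complex.log w))
      (Complex.exp (lam * Complex.log (1/2 + Complex.I * x)) * (lam * (1/2 + Complex.I * x)⁻¹))
      (1/2 + Complex.I * x) :=
    ((Complex.hasDerivAt_log (zeta_slit x)).const_mul lam).cexp
  exact comp_real (h := fun w : ℂ => Complex.exp (lam * Complex.log w)) houter (hasDerivAt_zeta x)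

lemma hasDerivAt_zm (x : ℝ) (lam : ℂ) :
    HasDerivAt (fun y : ℝ => zm y lam)
      (-Complex.I * (zm x lam * (lam * (1/2 - Complex.I * x)⁻¹))) x := by
  have houter : HasDerivAt (fun w : ℂ => Complex.exp (lam * Complex.log w))
      (Complex.exp (lam * Complex.log (1/2 - Complex.I * x)) * (lam * (1/2 - Complex.I * x)⁻¹))
      (1/2 - Complex.I * x) :=
    ((Complex.hasDerivAt_log (xi_slit x)).const_mul lam).cexp
  exact comp_real (h := fun w : ℂ => Complex.exp (lam * Complex.log w)) houter (hasDerivAt_xi x)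

end Stmt7Aux

/-- Section 2.4: on `(-√3/2, √3/2)` the solutions `S₁`, `S₂` are differentiable and
their Wronskian equals `i(α+iβ)/(1/4+x²)`. -/
theorem stmt7 (α β : ℝ) (hne : ∀ m : ℤ, (α : ℂ) + Complex.I * β ≠ m) (μ : ℂ) :
    ∀ x ∈ Set.Ioo (-(Real.sqrt 3/2)) (Real.sqrt 3/2),
      DifferentiableAt ℝ (S1 α β μ) x ∧ DifferentiableAt ℝ (S2 α β μ) x ∧
      S1 α β μ x * deriv (S2 α β μ) x - S2 α β μ x * deriv (S1 α β μ) x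
        = Complex.I * ((α : ℂ) + Complex.I*β) / (1/4 + (x : ℂ)^2) := by
  intro x hx
  obtain ⟨hx1, hx2⟩ := hx
  have h3 : Real.sqrt 3 ^ 2 = 3 := Real.sq_sqrt (by norm_num)
  have hxsq : x^2 < 3/4 := by
    have h := sq_lt_sq' hx1 hx2
    calc x^2 < (Real.sqrt 3/2)^2 := h
      _ = 3/4 := by rw [div_pow, h3]; norm_num
  have hζnorm : ‖(1/2 + Complex.I*(x:ℂ) : ℂ)‖ < 1 := by
    have hsq : ‖(1/2 + Complex.I*(x:ℂ) : ℂ)‖^2 = 1/4 + x^2 := by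
      rw [Complex.sq_norm, Complex.normSq_apply]
      simp
      ring
    nlinarith [norm_nonneg (1/2 + Complex.I*(x:ℂ) : ℂ)]
  have hζ0 : (1/2 + Complex.I*(x:ℂ) : ℂ) ≠ 0 := by
    intro h
    rw [Complex.ext_iff] at h
    simp at h
  have hξ0 : (1/2 - Complex.I*(x:ℂ) : ℂ) ≠ 0 := by
    intro h
    rw [Complex.ext_iff] at h
    simp at h
  have hc1 : ∀ k : ℕ, (1 - (α:ℂ) - Complex.I*β) + (k:ℂ) ≠ 0 := by
    intro k h
    apply hne ((k:ℤ)+1)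
    push_cast
    linear_combination -h
  have hc2 : ∀ k : ℕ, (1 + (α:ℂ) + Complex.I*β) + (k:ℂ) ≠ 0 := by
    intro k h
    apply hne (-((k:ℤ)+1))
    push_cast
    linear_combination h
  have hc1' : ∀ k : ℕ, (1 - ((α:ℂ) + Complex.I*β)) + (k:ℂ) ≠ 0 := by
    intro k h
    exact hc1 k (by linear_combination h)
  have hc2' : ∀ k : ℕ, (1 + ((α:ℂ) + Complex.I*β)) + (k:ℂ) ≠ 0 := by
    intro k h
    exact hc2 k (by linear_combination h)
  have hζ' := Stmt7Aux.hasDerivAt_zeta x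
  have hA := Stmt7Aux.hasDerivAt_F21 (1/2 - (α:ℂ) + μ) (1/2 - (α:ℂ) - μ) hc1 hζnorm
  have hB := Stmt7Aux.hasDerivAt_F21 (1/2 + (α:ℂ) + μ) (1/2 + (α:ℂ) - μ) hc2 hζnorm
  have hAc := Stmt7Aux.comp_real (h := fun w => F21 (1/2 - (α:ℂ) + μ) (1/2 - (α:ℂ) - μ)
    (1 - (α:ℂ) - Complex.I*β) w)
    (f := fun y : ℝ => 1/2 + Complex.I * (y:ℂ)) hA hζ'
  have hBc := Stmt7Aux.comp_real (h := fun w => F21 (1/2 + (α:ℂ) + μ) (1/2 + (α:ℂ) - μ)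
    (1 + (α:ℂ) + Complex.I*β) w)
    (f := fun y : ℝ => 1/2 + Complex.I * (y:ℂ)) hB hζ'
  have hP1 := Stmt7Aux.hasDerivAt_zp x (-((α:ℂ) + Complex.I*β)/2)
  have hM1 := Stmt7Aux.hasDerivAt_zm x (-((α:ℂ) - Complex.I*β)/2)
  have hP2 := Stmt7Aux.hasDerivAt_zp x (((α:ℂ) + Complex.I*β)/2)
  have hM2 := Stmt7Aux.hasDerivAt_zm x (((α:ℂ) - Complex.I*β)/2)
  have hS1 : HasDerivAt (S1 α β μ) _ x := (hP1.fun_mul hM1).mul hAc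
  have hS2 : HasDerivAt (S2 α β μ) _ x := (hP2.fun_mul hM2).mul hBc
  refine ⟨hS1.differentiableAt, hS2.differentiableAt, ?_⟩
  rw [hS1.deriv, hS2.deriv]
  simp only [S1, S2]
  -- abbreviations
  have hQ : zp x (-((α:ℂ) + Complex.I*β)/2) * zm x (-((α:ℂ) - Complex.I*β)/2)
      * (zp x (((α:ℂ) + Complex.I*β)/2) * zm x (((α:ℂ) - Complex.I*β)/2)) = 1 := by
    rw [zp, zp, zm, zm, ← Complex.exp_add, ← Complex.exp_add, ← Complex.exp_add,
      ← Complex.exp_zero]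
    congr 1
    ring
  have hGG := Stmt7Aux.G_const (α:ℂ) ((α:ℂ) + Complex.I*β) μ hc1' hc2' hζnorm
  rw [show (1:ℂ) - ((α:ℂ) + Complex.I*β) = 1 - (α:ℂ) - Complex.I*β from by ring,
    show (1:ℂ) + ((α:ℂ) + Complex.I*β) = 1 + (α:ℂ) + Complex.I*β from by ring,
    show (1:ℂ) - (1/2 + Complex.I*(x:ℂ)) = 1/2 - Complex.I*(x:ℂ) from by ring,
    show 2*(α:ℂ) - ((α:ℂ) + Complex.I*β) = (α:ℂ) - Complex.I*β from by ring] at hGG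
  rw [show (1/4 + (x:ℂ)^2 : ℂ)
      = (1/2 + Complex.I*(x:ℂ)) * (1/2 - Complex.I*(x:ℂ)) from by
    linear_combination (x:ℂ)^2 * Complex.I_sq]
  rw [eq_div_iff (mul_ne_zero hζ0 hξ0)]
  have hinv1 : (1/2 + Complex.I*(x:ℂ)) * (1/2 + Complex.I*(x:ℂ))⁻¹ = 1 :=
    mul_inv_cancel₀ hζ0
  have hinv2 : (1/2 - Complex.I*(x:ℂ)) * (1/2 - Complex.I*(x:ℂ))⁻¹ = 1 :=
    mul_inv_cancel₀ hξ0
  set γ := (α:ℂ) + Complex.I*β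
  set γ2 := (α:ℂ) - Complex.I*β
  set A := F21 (1/2 - (α:ℂ) + μ) (1/2 - (α:ℂ) - μ) (1 - (α:ℂ) - Complex.I*β)
    (1/2 + Complex.I*(x:ℂ))
  set B := F21 (1/2 + (α:ℂ) + μ) (1/2 + (α:ℂ) - μ) (1 + (α:ℂ) + Complex.I*β)
    (1/2 + Complex.I*(x:ℂ))
  set Ad := Stmt7Aux.F21d (1/2 - (α:ℂ) + μ) (1/2 - (α:ℂ) - μ) (1 - (α:ℂ) - Complex.I*β)
    (1/2 + Complex.I*(x:ℂ))
  set Bd := Stmt7Aux.F21d (1/2 + (α:ℂ) + μ) (1/2 + (α:ℂ) - μ) (1 + (α:ℂ) + Complex.I*β)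
    (1/2 + Complex.I*(x:ℂ))
  set P1 := zp x (-γ/2)
  set M1 := zm x (-γ2/2)
  set P2 := zp x (γ/2)
  set M2 := zm x (γ2/2)
  set ζ := (1/2 + Complex.I*(x:ℂ) : ℂ)
  set ξ := (1/2 - Complex.I*(x:ℂ) : ℂ)
  linear_combination (Complex.I * (P1*M1*(P2*M2))) * hGG
    + (Complex.I*γ) * hQ
    + (Complex.I*γ*ξ*A*B*(P1*M1*(P2*M2))) * hinv1
    - (Complex.I*γ2*ζ*A*B*(P1*M1*(P2*M2))) * hinv2
end
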